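/- If a finite set G ⊆ ℤ is the projection {x : ∃y ∈ ℤ^n, (x,y) ∈ P} of the integer points of a single convex polyhedron P ⊆ ℝ^{n+1}, and |G| ≥ k^{n+1} + 1, then G contains a non-trivial (k+1)-term arithmetic progression. -/

import Mathlib

theorem single_polyhedron_projection_contains_ap (n k : ℕ) (hk : 2 ≤ k)
    (P : Set (ℝ × (Fin n → ℝ))) (hP : Convex ℝ P)
    (G : Set ℤ)
    (hG : G = {x : ℤ | ∃ y : Fin n → ℤ,
        (((x : ℝ), fun t => (y t : ℝ)) : ℝ × (Fin n → ℝ)) ∈ P})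
    (hfin : G.Finite) (hcard : k ^ (n + 1) + 1 ≤ G.ncard) :
    ∃ a d : ℤ, d ≠ 0 ∧ ∀ l : ℕ, l ≤ k → a + (l : ℤ) * d ∈ G := by
  classical
  haveI : NeZero k := ⟨by omega⟩
  have hkR : (0:ℝ) < (k:ℝ) := by exact_mod_cast (by omega : 0 < k)
  -- choose witnesses
  have hwit : ∀ x : ℤ, ∃ y : Fin n → ℤ,
      x ∈ G → (((x : ℝ), fun t => (y t : ℝ)) : ℝ × (Fin n → ℝ)) ∈ P := by
    intro x
    by_cases hx : x ∈ G
    · rw [hG] at hx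
      obtain ⟨y, hy⟩ := hx
      exact ⟨y, fun _ => hy⟩
    · exact ⟨0, fun h => absurd h hx⟩
  choose Y hY using hwit
  -- pigeonhole
  set f : ℤ → ZMod k × (Fin n → ZMod k) :=
    fun x => ((x : ZMod k), fun t => ((Y x t : ℤ) : ZMod k)) with hf
  have hcardt : (Finset.univ : Finset (ZMod k × (Fin n → ZMod k))).card
      < hfin.toFinset.card := by
    rw [Finset.card_univ]
    have : Fintype.card (ZMod k × (Fin n → ZMod k)) = k ^ (n + 1) := by
      simp [Fintype.card_prod, ZMod.card, pow_succ, mul_comm]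
    rw [this, ← Set.ncard_eq_toFinset_card _ hfin]
    omega
  obtain ⟨x₁, hx₁, x₂, hx₂, hne, hfe⟩ :=
    Finset.exists_ne_map_eq_of_card_lt_of_maps_to hcardt
      (fun a _ => Finset.mem_univ (f a))
  rw [Set.Finite.mem_toFinset] at hx₁ hx₂
  have hfe1 : (x₁ : ZMod k) = (x₂ : ZMod k) := congrArg Prod.fst hfe
  have hfe2 : ∀ t, ((Y x₁ t : ℤ) : ZMod k) = ((Y x₂ t : ℤ) : ZMod k) := by
    intro t
    exact congrFun (congrArg Prod.snd hfe) t
  have hdvd1 : (k : ℤ) ∣ x₂ - x₁ := ((ZMod.intCast_eq_intCast_iff x₁ x₂ k).mp hfe1).dvd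
  obtain ⟨c, hc⟩ := hdvd1
  have hcne : c ≠ 0 := by
    rintro rfl
    apply hne
    omega
  have hdvd2 : ∀ t, ∃ e : ℤ, Y x₂ t - Y x₁ t = k * e := by
    intro t
    exact ((ZMod.intCast_eq_intCast_iff _ _ k).mp (hfe2 t)).dvd
  choose e he using hdvd2
  refine ⟨x₁, c, hcne, ?_⟩
  intro l hl
  rw [hG]
  refine ⟨fun t => Y x₁ t + l * e t, ?_⟩
  have h1 : (((x₁ : ℝ), fun t => ((Y x₁ t : ℤ) : ℝ)) : ℝ × (Fin n → ℝ)) ∈ P := hY x₁ hx₁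
  have h2 : (((x₂ : ℝ), fun t => ((Y x₂ t : ℤ) : ℝ)) : ℝ × (Fin n → ℝ)) ∈ P := hY x₂ hx₂
  have ha : (0:ℝ) ≤ ((k : ℝ) - l) / k := by
    apply div_nonneg _ hkR.le
    have : (l:ℝ) ≤ k := by exact_mod_cast hl
    linarith
  have hb : (0:ℝ) ≤ (l : ℝ) / k := by positivity
  have hab : ((k : ℝ) - l) / k + (l : ℝ) / k = 1 := by
    field_simp
    ring
  have := hP h1 h2 ha hb hab
  convert this using 1
  apply Prod.ext
  · simp only [Prod.fst_add, Prod.smul_fst, smul_eq_mul]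
    have hx2 : (x₂ : ℝ) = (x₁ : ℝ) + k * c := by
      have : x₂ = x₁ + k * c := by omega
      rw [this]; push_cast; ring
    rw [hx2]
    push_cast
    field_simp
    ring
  · simp only [Prod.snd_add, Prod.smul_snd]
    funext t
    simp only [Pi.add_apply, Pi.smul_apply, smul_eq_mul]
    have hy2 : ((Y x₂ t : ℤ) : ℝ) = (Y x₁ t : ℝ) + k * e t := by
      have := he t
      have h' : Y x₂ t = Y x₁ t + k * e t := by omega
      rw [h']; push_cast; ring
    rw [hy2]
    push_cast
    field_simp
    ring
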